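/- arXiv:2507.12729 — 2 statements merged into one kernel-verified Lean document; each statement's English description precedes it below -/
import Mathlib

section
/- Fix n₃ ≥ 1 and an orthogonal matrix M ∈ ℝ^{n₃×n₃} (MᵀM = I). Let A be a ⋆_M-symmetric tensor of size n × n × n₃, let Â = A ×₃ M, and let r be the maximum over k ∈ {1,…,n₃} of the rank of the k-th frontal slice of Â. Then A is ⋆_M-positive semidefinite if and only if there exists a tensor B of size n × r × n₃ such that A = B ⋆_M Bᵀ. -/
open Matrix BigOperators Kronecker

noncomputable section

/-- The tubal `⋆_M`-product of tubes `a, b : Fin n₃ → R`: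
`a ⋆_M b = M⁻¹ *ᵥ ((M *ᵥ a) ⊙ (M *ᵥ b))`, where `⊙` is the entrywise product. -/
def tubMul {n₃ : ℕ} {R : Type} [CommRing R] (M : Matrix (Fin n₃) (Fin n₃) R)
    (a b : Fin n₃ → R) : Fin n₃ → R :=
  M⁻¹ *ᵥ ((M *ᵥ a) * (M *ᵥ b))

/-- The tensor `⋆_M`-product of an `ι × κ × n₃` tensor with a `κ × μ × n₃` tensor. -/
def tenMul {n₃ : ℕ} {R : Type} [CommRing R] {ι κ μ : Type} [Fintype κ]
    (M : Matrix (Fin n₃) (Fin n₃) R)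
    (A : ι → κ → (Fin n₃ → R)) (B : κ → μ → (Fin n₃ → R)) : ι → μ → (Fin n₃ → R) :=
  fun i j => ∑ ℓ, tubMul M (A i ℓ) (B ℓ j)

/-- The `⋆_M`-transpose of a tensor. -/
def tenTrans {ι κ γ : Type} (A : ι → κ → γ) : κ → ι → γ := fun i j => A j i

/-- The inner product of two same-size third order tensors. -/
def tenInner {n₃ : ℕ} {ι κ : Type} [Fintype ι] [Fintype κ]
    (A B : ι → κ → (Fin n₃ → ℝ)) : ℝ :=
  ∑ i, ∑ j, ∑ k, A i j k * B i j k

/-- A square tensor is `⋆_M`-positive semidefinite if it is `⋆_M`-symmetric and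
`⟨X, A ⋆_M X⟩ ≥ 0` for all `X` of size `n × 1 × n₃`. -/
def tenPSD {n₃ : ℕ} {ι : Type} [Fintype ι] (M : Matrix (Fin n₃) (Fin n₃) ℝ)
    (A : ι → ι → (Fin n₃ → ℝ)) : Prop :=
  tenTrans A = A ∧ ∀ X : ι → Fin 1 → (Fin n₃ → ℝ), 0 ≤ tenInner X (tenMul M A X)

/-- The multiplicative identity tube `e_M = M⁻¹ 𝟙`. -/
def tubOne {n₃ : ℕ} (M : Matrix (Fin n₃) (Fin n₃) ℝ) : Fin n₃ → ℝ :=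
  M⁻¹ *ᵥ (fun _ => 1)

/-- The `⋆_M`-identity tensor. -/
def tenId {n₃ : ℕ} {ι : Type} [DecidableEq ι] (M : Matrix (Fin n₃) (Fin n₃) ℝ) :
    ι → ι → (Fin n₃ → ℝ) :=
  fun i j => if i = j then tubOne M else 0

/-- The block matricization `mat_M(A)`: the `(i,j)` block is `diag(M *ᵥ A i j)`. -/
def tenMat {n₃ : ℕ} {ι κ : Type} (M : Matrix (Fin n₃) (Fin n₃) ℝ)
    (A : ι → κ → (Fin n₃ → ℝ)) : Matrix (ι × Fin n₃) (κ × Fin n₃) ℝ :=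
  Matrix.of fun p q => if p.2 = q.2 then (M *ᵥ A p.1 q.1) p.2 else 0

lemma psd_factor {n r : ℕ} (S : Matrix (Fin n) (Fin n) ℝ) (hS : S.PosSemidef)
    (hr : S.rank ≤ r) : ∃ C : Matrix (Fin n) (Fin r) ℝ, S = C * Cᵀ := by
  classical
  have hH := hS.1
  have hcard : Fintype.card {i // hH.eigenvalues i ≠ 0} ≤ r := by
    rw [← hH.rank_eq_card_non_zero_eigs]
    simpa using hr
  obtain ⟨e⟩ : Nonempty ({i // hH.eigenvalues i ≠ 0} ↪ Fin r) := by
    simpa using Function.Embedding.nonempty_of_card_le (by simpa using hcard)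
  set U : Matrix (Fin n) (Fin n) ℝ := (hH.eigenvectorUnitary : Matrix (Fin n) (Fin n) ℝ) with hU
  set F : Matrix (Fin n) (Fin r) ℝ := Matrix.of fun i j =>
    if h : hH.eigenvalues i ≠ 0 then
      (if e ⟨i, h⟩ = j then Real.sqrt (hH.eigenvalues i) else 0) else 0 with hF
  refine ⟨U * F, ?_⟩
  have hFF : F * Fᵀ = Matrix.diagonal hH.eigenvalues := by
    ext i i'
    simp only [Matrix.mul_apply, Matrix.transpose_apply, hF, Matrix.of_apply,
      Matrix.diagonal_apply]
    by_cases hi : hH.eigenvalues i ≠ 0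
    · by_cases hi' : hH.eigenvalues i' ≠ 0
      · simp only [dif_pos hi, dif_pos hi', ite_mul, zero_mul, mul_ite, mul_zero]
        by_cases hii : i = i'
        · subst hii
          simp [Finset.sum_ite_eq', Real.mul_self_sqrt (hS.eigenvalues_nonneg i)]
        · rw [if_neg hii, Finset.sum_eq_zero]
          intro j _
          by_cases h1 : e ⟨i, hi⟩ = j
          · have h2 : e ⟨i', hi'⟩ ≠ j := by
              intro h2
              exact hii (by
                have := e.injective (h1.trans h2.symm)
                exact Subtype.mk_eq_mk.mp this)
            simp [h1, h2]
          · simp [h1]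
      · push_neg at hi'
        rw [Finset.sum_eq_zero (fun j _ => by simp [dif_neg (not_not.mpr hi')])]
        by_cases h : i = i'
        · subst h; exact (hi hi').elim
        · simp [h]
    · push_neg at hi
      rw [Finset.sum_eq_zero (fun j _ => by simp [dif_neg (not_not.mpr hi)])]
      by_cases h : i = i'
      · subst h; simp [hi]
      · simp [h]
  have hspec := hH.spectral_theorem
  rw [Matrix.transpose_mul, ← Matrix.mul_assoc, Matrix.mul_assoc U F, hFF]
  refine hspec.trans ?_
  have h1 : Matrix.diagonal (RCLike.ofReal ∘ hH.eigenvalues) = Matrix.diagonal hH.eigenvalues := by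
    ext i j; simp [Matrix.diagonal]
  have h2 : star U = Uᵀ := by
    rw [Matrix.star_eq_conjTranspose, Matrix.conjTranspose_eq_transpose_of_trivial]
  rw [Unitary.conjStarAlgAut_apply, h1, h2]

lemma mulVec_sum' {m n₃ : ℕ} (M : Matrix (Fin n₃) (Fin n₃) ℝ) (f : Fin m → Fin n₃ → ℝ) :
    (∑ ℓ, M *ᵥ f ℓ) = M *ᵥ ∑ ℓ, f ℓ := by
  ext k
  simp only [Finset.sum_apply, Matrix.mulVec, dotProduct, Finset.sum_apply,
    Finset.mul_sum]
  rw [Finset.sum_comm]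

lemma inner_formula {n₃ n : ℕ} (M : Matrix (Fin n₃) (Fin n₃) ℝ) (hM : Mᵀ * M = 1)
    (A : Fin n → Fin n → (Fin n₃ → ℝ)) (X : Fin n → Fin 1 → (Fin n₃ → ℝ)) :
    tenInner X (tenMul M A X) =
      ∑ k, ∑ i, ∑ j, (M *ᵥ X i 0) k * ((M *ᵥ A i j) k * (M *ᵥ X j 0) k) := by
  have hMinv : M⁻¹ = Mᵀ := Matrix.inv_eq_left_inv hM
  have key : ∀ i : Fin n, (∑ k, X i 0 k * (tenMul M A X) i 0 k)
      = ∑ k, ∑ j, (M *ᵥ X i 0) k * ((M *ᵥ A i j) k * (M *ᵥ X j 0) k) := by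
    intro i
    have h1 : (tenMul M A X) i 0 = Mᵀ *ᵥ ∑ ℓ, ((M *ᵥ A i ℓ) * (M *ᵥ X ℓ 0)) := by
      unfold tenMul tubMul
      simp only [hMinv]
      rw [mulVec_sum']
    calc (∑ k, X i 0 k * (tenMul M A X) i 0 k)
        = (X i 0) ⬝ᵥ ((tenMul M A X) i 0) := rfl
      _ = (X i 0) ⬝ᵥ (Mᵀ *ᵥ ∑ ℓ, ((M *ᵥ A i ℓ) * (M *ᵥ X ℓ 0))) := by rw [h1]
      _ = (M *ᵥ X i 0) ⬝ᵥ (∑ ℓ, ((M *ᵥ A i ℓ) * (M *ᵥ X ℓ 0))) := by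
            rw [Matrix.dotProduct_mulVec, Matrix.vecMul_transpose]
      _ = ∑ k, ∑ j, (M *ᵥ X i 0) k * ((M *ᵥ A i j) k * (M *ᵥ X j 0) k) := by
            simp [dotProduct, Finset.sum_apply, Pi.mul_apply, Finset.mul_sum]
  unfold tenInner
  simp only [Fin.sum_univ_one]
  rw [Finset.sum_congr rfl (fun i _ => key i), Finset.sum_comm]

/-- A `⋆_M`-symmetric tensor `A` is `⋆_M`-PSD iff `A = B ⋆_M Bᵀ` for some
tensor `B` of size `n × r × n₃`, where `r` is the maximal rank of a frontal slice of
`Â = A ×₃ M` (the `⋆_M`-rank of `A`). -/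
theorem tenPSD_iff_square_root_factorization (n₃ n : ℕ) (hn₃ : 1 ≤ n₃)
    (M : Matrix (Fin n₃) (Fin n₃) ℝ) (hM : Mᵀ * M = 1)
    (A : Fin n → Fin n → (Fin n₃ → ℝ)) (hA : tenTrans A = A) (r : ℕ)
    (hr : r = Finset.univ.sup
      (fun k : Fin n₃ => (Matrix.of fun i j : Fin n => (M *ᵥ A i j) k).rank)) :
    tenPSD M A ↔
      ∃ B : Fin n → Fin r → (Fin n₃ → ℝ), A = tenMul M B (tenTrans B) := by
  classical
  have hMinv : M⁻¹ = Mᵀ := Matrix.inv_eq_left_inv hM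
  have hMM : M * Mᵀ = 1 := mul_eq_one_comm.mp hM
  set Ah : Fin n₃ → Matrix (Fin n) (Fin n) ℝ :=
    fun k => Matrix.of fun i j => (M *ᵥ A i j) k with hAhdef
  -- cancellation lemmas
  have hcancel : ∀ v : Fin n₃ → ℝ, M *ᵥ (Mᵀ *ᵥ v) = v := by
    intro v; rw [Matrix.mulVec_mulVec, hMM, Matrix.one_mulVec]
  have hcancel' : ∀ v : Fin n₃ → ℝ, Mᵀ *ᵥ (M *ᵥ v) = v := by
    intro v; rw [Matrix.mulVec_mulVec, hM, Matrix.one_mulVec]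
  -- slices PSD → tenPSD
  have dir1 : (∀ k, (Ah k).PosSemidef) → tenPSD M A := by
    intro h
    refine ⟨hA, fun X => ?_⟩
    rw [inner_formula M hM A X]
    apply Finset.sum_nonneg
    intro k _
    have h1 := (h k).dotProduct_mulVec_nonneg (fun i => (M *ᵥ X i 0) k)
    simp only [star_trivial] at h1
    have heq : dotProduct (fun i => (M *ᵥ X i 0) k)
        ((Ah k) *ᵥ (fun i => (M *ᵥ X i 0) k))
        = ∑ i, ∑ j, (M *ᵥ X i 0) k * ((M *ᵥ A i j) k * (M *ᵥ X j 0) k) := by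
      simp [dotProduct, Matrix.mulVec, Finset.mul_sum, hAhdef, mul_comm,
        mul_left_comm]
    rw [← heq]
    exact h1
  -- tenPSD → slices PSD
  have dir2 : tenPSD M A → ∀ k, (Ah k).PosSemidef := by
    intro h k
    refine Matrix.PosSemidef.of_dotProduct_mulVec_nonneg ?_ ?_
    · ext i j
      have := congrFun (congrFun hA i) j
      simp only [tenTrans] at this
      simp [Matrix.conjTranspose_apply, hAhdef, ← this]
    · intro x
      set X : Fin n → Fin 1 → (Fin n₃ → ℝ) :=
        fun i _ => Mᵀ *ᵥ (fun k' => if k' = k then x i else 0) with hX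
    
      have hXhat : ∀ i, M *ᵥ X i 0 = fun k' => if k' = k then x i else 0 := by
        intro i; rw [hX]; exact hcancel _
      have h0 := h.2 X
      rw [inner_formula M hM A X] at h0
      simp only [hXhat] at h0
      have heval : (∑ k', ∑ i, ∑ j, (if k' = k then x i else 0) *
          ((M *ᵥ A i j) k' * (if k' = k then x j else 0)))
          = ∑ i, ∑ j, x i * ((M *ᵥ A i j) k * x j) := by
        rw [Finset.sum_eq_single k]
        · simp
        · intro k' _ hk'
          apply Finset.sum_eq_zero; intro i _
          apply Finset.sum_eq_zero; intro j _
          simp [hk']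
        · simp
      rw [heval] at h0
      simpa [dotProduct, Matrix.mulVec, Finset.mul_sum, hAhdef] using h0
  constructor
  · intro h
    have hpsd := dir2 h
    have hrank : ∀ k, (Ah k).rank ≤ r := by
      intro k
      rw [hr]
      exact Finset.le_sup (f := fun k : Fin n₃ =>
        (Matrix.of fun i j : Fin n => (M *ᵥ A i j) k).rank) (Finset.mem_univ k)
    have hfac : ∀ k, ∃ C : Matrix (Fin n) (Fin r) ℝ, Ah k = C * Cᵀ :=
      fun k => psd_factor (Ah k) (hpsd k) (hrank k)
    choose C hC using hfac
    refine ⟨fun i j => Mᵀ *ᵥ (fun k => C k i j), ?_⟩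
    funext i j
    have hBhat : ∀ i j, M *ᵥ (Mᵀ *ᵥ (fun k => C k i j)) = fun k => C k i j :=
      fun i j => hcancel _
    have : M *ᵥ (tenMul M (fun i j => Mᵀ *ᵥ (fun k => C k i j))
        (tenTrans (fun i j => Mᵀ *ᵥ (fun k => C k i j))) i j) = M *ᵥ A i j := by
      unfold tenMul tubMul tenTrans
      simp only [hMinv]
      rw [mulVec_sum', hcancel]
      funext k
      simp only [Finset.sum_apply, Pi.mul_apply, hBhat]
      have := congrFun (congrFun (hC k) i) j
      simp only [Matrix.mul_apply, Matrix.transpose_apply, hAhdef, Matrix.of_apply] at this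
      exact this.symm
    have h2 := congrArg (fun v => Mᵀ *ᵥ v) this
    simpa [hcancel'] using h2.symm
  · rintro ⟨B, rfl⟩
    apply dir1
    intro k
    have hAhk : Ah k = (Matrix.of fun i j => (M *ᵥ B i j) k) *
        (Matrix.of fun i j => (M *ᵥ B i j) k)ᵀ := by
      ext i j
      have : M *ᵥ (tenMul M B (tenTrans B) i j) = ∑ ℓ, ((M *ᵥ B i ℓ) * (M *ᵥ B j ℓ)) := by
        unfold tenMul tubMul tenTrans
        simp only [hMinv]
        rw [mulVec_sum', hcancel]
      simp only [hAhdef, Matrix.of_apply, Matrix.mul_apply, Matrix.transpose_apply]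
      rw [this]
      simp [Finset.sum_apply]
    rw [hAhk]
    have := Matrix.posSemidef_self_mul_conjTranspose (Matrix.of fun i j => (M *ᵥ B i j) k)
    simpa [Matrix.conjTranspose_eq_transpose_of_trivial] using this


end
end

section
/- Fix n₃ ≥ 1 and an orthogonal matrix M ∈ ℝ^{n₃×n₃} (MᵀM = I). Let A be a ⋆_M-symmetric tensor of size n × n × n₃. Then A is ⋆_M-positive semidefinite if and only if for every nonempty subset J ⊆ {1,…,n} the ⋆_M-principal minor det_M(A_{J,J}) = Σ_{σ ∈ Sym(J)} sgn(σ) · A_{j₁,σ(j₁)} ⋆_M A_{j₂,σ(j₂)} ⋆_M ⋯ ⋆_M A_{j_ℓ,σ(j_ℓ)} (where J = {j₁ < j₂ < ⋯ < j_ℓ}) is a square in ℝ_M, i.e. equals x ⋆_M x for some x ∈ ℝ^{n₃}. -/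
open Matrix BigOperators Kronecker

noncomputable section

/-- The `⋆_M`-principal minor of `A` indexed by a subset `J`:
`Σ_{σ ∈ Sym(J)} sgn(σ) · ⋆_M-product of the tubes A_{j, σ(j)} for j ∈ J`
(the iterated `⋆_M`-product is taken with the identity tube `e_M` as base case). -/
def tenMinor {n₃ n : ℕ} (M : Matrix (Fin n₃) (Fin n₃) ℝ)
    (A : Fin n → Fin n → (Fin n₃ → ℝ)) (J : Finset (Fin n)) : Fin n₃ → ℝ :=
  ∑ σ : Equiv.Perm {x // x ∈ J},
    (Equiv.Perm.sign σ : ℤ) •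
      (J.attach.toList.map (fun j => A j.1 (σ j).1)).foldr (tubMul M) (tubOne M)

section AuxMat

/-- Principal minor of a matrix indexed by a subset. -/
def pminor {m : ℕ} (B : Matrix (Fin m) (Fin m) ℝ) (J : Finset (Fin m)) : ℝ :=
  (B.submatrix (fun x : {x // x ∈ J} => x.1) (fun x : {x // x ∈ J} => x.1)).det

lemma det_piecewise_one {m : ℕ} (B : Matrix (Fin m) (Fin m) ℝ) (t : ℝ) (s : Finset (Fin m)) :
    Matrix.det (Matrix.of (s.piecewise (B : Fin m → Fin m → ℝ) (t • (1 : Matrix (Fin m) (Fin m) ℝ))))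
      = t ^ sᶜ.card * pminor B s := by
  have hv : Matrix.of (s.piecewise (B : Fin m → Fin m → ℝ) (t • (1 : Matrix (Fin m) (Fin m) ℝ)))
      = Matrix.of fun i j => (if i ∈ s then (1:ℝ) else t)
          * Matrix.of (s.piecewise (B : Fin m → Fin m → ℝ) ((1 : Matrix (Fin m) (Fin m) ℝ) : Fin m → Fin m → ℝ)) i j := by
    funext i j
    by_cases h : i ∈ s <;> simp [Finset.piecewise, h, Matrix.smul_apply]
  rw [hv, Matrix.det_mul_column]
  have hprod : (∏ i, if i ∈ s then (1:ℝ) else t) = t ^ sᶜ.card := by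
    rw [Finset.prod_ite, Finset.prod_const, Finset.prod_const, one_pow, one_mul]
    congr 2
    ext i; simp
  rw [hprod]
  congr 1
  set D : Matrix (Fin m) (Fin m) ℝ :=
    Matrix.of (s.piecewise (B : Fin m → Fin m → ℝ) ((1 : Matrix (Fin m) (Fin m) ℝ) : Fin m → Fin m → ℝ)) with hD
  have h := Matrix.twoBlockTriangular_det D (fun i => i ∈ s) ?_
  · rw [h]
    have h1 : (D.toSquareBlockProp fun i => i ∈ s)
        = B.submatrix (fun x : {x // x ∈ s} => x.1) (fun x : {x // x ∈ s} => x.1) := by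
      ext i j
      simp [hD, Matrix.toSquareBlockProp, Finset.piecewise, i.2]
    have h2 : (D.toSquareBlockProp fun i => ¬ i ∈ s)
        = (1 : Matrix {i // ¬ i ∈ s} {i // ¬ i ∈ s} ℝ) := by
      ext i j
      simp [hD, Matrix.toSquareBlockProp, Finset.piecewise, i.2, Matrix.one_apply,
        Subtype.ext_iff]
    rw [h1, h2, Matrix.det_one, mul_one, pminor]
    congr!
  · intro i hi j hj
    simp only [hD, Finset.piecewise, Matrix.of_apply, if_neg hi]
    exact Matrix.one_apply_ne (fun h => hi (h ▸ hj))

lemma det_add_smul_one {m : ℕ} (B : Matrix (Fin m) (Fin m) ℝ) (t : ℝ) :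
    (B + t • (1 : Matrix (Fin m) (Fin m) ℝ)).det
      = ∑ s : Finset (Fin m), t ^ sᶜ.card * pminor B s := by
  have h := (Matrix.detRowAlternating (R := ℝ) (n := Fin m)).toMultilinearMap.map_add_univ
    (B : Fin m → Fin m → ℝ) (t • (1 : Matrix (Fin m) (Fin m) ℝ) : Fin m → Fin m → ℝ)
  have h2 : (B + t • (1 : Matrix (Fin m) (Fin m) ℝ)).det
      = ∑ s : Finset (Fin m),
          Matrix.det (Matrix.of (s.piecewise (B : Fin m → Fin m → ℝ)
            (t • (1 : Matrix (Fin m) (Fin m) ℝ)))) := h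
  rw [h2]
  exact Finset.sum_congr rfl fun s _ => det_piecewise_one B t s

lemma psd_of_minors {m : ℕ} (B : Matrix (Fin m) (Fin m) ℝ) (hB : B.IsHermitian)
    (h : ∀ J : Finset (Fin m), J.Nonempty → 0 ≤ pminor B J) : B.PosSemidef := by
  refine hB.posSemidef_iff_eigenvalues_nonneg.mpr fun i => show 0 ≤ hB.eigenvalues i from ?_
  by_contra hneg
  push_neg at hneg
  set t : ℝ := -hB.eigenvalues i with ht
  have htpos : 0 < t := by simp [ht]; linarith
  have hdet0 : (B + t • (1 : Matrix (Fin m) (Fin m) ℝ)).det = 0 := by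
    rw [← Matrix.exists_mulVec_eq_zero_iff]
    refine ⟨⇑(hB.eigenvectorBasis i), ?_, ?_⟩
    · exact (WithLp.ofLp_eq_zero (p := 2)).not.mpr (hB.eigenvectorBasis.orthonormal.ne_zero i)
    · rw [Matrix.add_mulVec, hB.mulVec_eigenvectorBasis, Matrix.smul_mulVec,
        Matrix.one_mulVec]
      funext k
      simp [ht]
  have hpos : 0 < (B + t • (1 : Matrix (Fin m) (Fin m) ℝ)).det := by
    rw [det_add_smul_one]
    have hterm : ∀ s : Finset (Fin m), s ∈ Finset.univ → 0 ≤ t ^ sᶜ.card * pminor B s := by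
      intro s _
      rcases s.eq_empty_or_nonempty with rfl | hs
      · have he : pminor B (∅ : Finset (Fin m)) = 1 := Matrix.det_isEmpty
        rw [he]; positivity
      · exact mul_nonneg (by positivity) (h s hs)
    calc (0:ℝ) < t ^ (∅ : Finset (Fin m))ᶜ.card * pminor B ∅ := by
          have he : pminor B (∅ : Finset (Fin m)) = 1 := Matrix.det_isEmpty
          rw [he, mul_one]; positivity
      _ ≤ _ := Finset.single_le_sum hterm (Finset.mem_univ _)
  rw [hdet0] at hpos
  exact lt_irrefl _ hpos

lemma psd_minor_nonneg {m : ℕ} (B : Matrix (Fin m) (Fin m) ℝ) (hB : B.PosSemidef)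
    (J : Finset (Fin m)) : 0 ≤ pminor B J := by
  have h := hB.submatrix (fun x : {x // x ∈ J} => x.1)
  rw [pminor, h.isHermitian.det_eq_prod_eigenvalues]
  exact Finset.prod_nonneg fun i _ => h.eigenvalues_nonneg i

end AuxMat

section AuxTub
variable {n₃ : ℕ} {M : Matrix (Fin n₃) (Fin n₃) ℝ} (hM : Mᵀ * M = 1)
include hM

lemma hMM : M * Mᵀ = 1 := mul_eq_one_comm.mp hM

lemma hinv : M⁻¹ = Mᵀ := Matrix.inv_eq_left_inv hM

lemma mul_inv_vec (v : Fin n₃ → ℝ) : M *ᵥ (M⁻¹ *ᵥ v) = v := by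
  rw [Matrix.mulVec_mulVec, hinv hM, hMM hM, Matrix.one_mulVec]

lemma inv_mul_vec (v : Fin n₃ → ℝ) : M⁻¹ *ᵥ (M *ᵥ v) = v := by
  rw [Matrix.mulVec_mulVec, hinv hM, hM, Matrix.one_mulVec]

lemma tubMul_hat (a b : Fin n₃ → ℝ) : M *ᵥ tubMul M a b = (M *ᵥ a) * (M *ᵥ b) := by
  rw [tubMul, mul_inv_vec hM]

lemma tubOne_hat : M *ᵥ tubOne M = fun _ => (1:ℝ) := by
  rw [tubOne, mul_inv_vec hM]

lemma foldr_hat (l : List (Fin n₃ → ℝ)) :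
    M *ᵥ (l.foldr (tubMul M) (tubOne M)) = fun k => (l.map fun a => (M *ᵥ a) k).prod := by
  induction l with
  | nil => simpa using tubOne_hat hM
  | cons a l ih =>
      funext k
      have h : M *ᵥ ((a :: l).foldr (tubMul M) (tubOne M))
          = (M *ᵥ a) * (M *ᵥ l.foldr (tubMul M) (tubOne M)) := tubMul_hat hM _ _
      rw [h]
      simp [ih]

lemma dot_inv (u w : Fin n₃ → ℝ) :
    ∑ k, u k * (M⁻¹ *ᵥ w) k = ∑ k, (M *ᵥ u) k * w k := by
  have h1 : ∑ k, u k * (M⁻¹ *ᵥ w) k = u ⬝ᵥ (M⁻¹ *ᵥ w) := rfl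
  have h2 : ∑ k, (M *ᵥ u) k * w k = (M *ᵥ u) ⬝ᵥ w := rfl
  rw [h1, h2, hinv hM, Matrix.dotProduct_mulVec, Matrix.vecMul_transpose]

lemma square_iff (a : Fin n₃ → ℝ) :
    (∃ x : Fin n₃ → ℝ, tubMul M x x = a) ↔ ∀ k, 0 ≤ (M *ᵥ a) k := by
  constructor
  · rintro ⟨x, rfl⟩ k
    rw [tubMul_hat hM]
    exact mul_self_nonneg _
  · intro h
    refine ⟨M⁻¹ *ᵥ fun k => Real.sqrt ((M *ᵥ a) k), ?_⟩
    rw [tubMul, mul_inv_vec hM]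
    have h2 : ((fun k => Real.sqrt ((M *ᵥ a) k)) * fun k => Real.sqrt ((M *ᵥ a) k)) = M *ᵥ a := by
      funext k
      exact Real.mul_self_sqrt (h k)
    rw [h2, inv_mul_vec hM]

lemma minor_hat {n : ℕ} (A : Fin n → Fin n → (Fin n₃ → ℝ)) (J : Finset (Fin n)) (k : Fin n₃) :
    (M *ᵥ tenMinor M A J) k
      = pminor (Matrix.of fun i j => (M *ᵥ A i j) k) J := by
  have hsum : M *ᵥ tenMinor M A J
      = ∑ σ : Equiv.Perm {x // x ∈ J},
          (Equiv.Perm.sign σ : ℤ) •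
            (M *ᵥ (J.attach.toList.map (fun j => A j.1 (σ j).1)).foldr (tubMul M) (tubOne M)) := by
    rw [tenMinor]
    rw [show (M *ᵥ ∑ σ : Equiv.Perm {x // x ∈ J},
        (Equiv.Perm.sign σ : ℤ) •
          (J.attach.toList.map (fun j => A j.1 (σ j).1)).foldr (tubMul M) (tubOne M))
      = M.mulVecLin (∑ σ : Equiv.Perm {x // x ∈ J},
        (Equiv.Perm.sign σ : ℤ) •
          (J.attach.toList.map (fun j => A j.1 (σ j).1)).foldr (tubMul M) (tubOne M)) from rfl]
    rw [map_sum]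
    exact Finset.sum_congr rfl fun σ _ => map_zsmul M.mulVecLin _ _
  rw [hsum]
  have hev : ∀ σ : Equiv.Perm {x // x ∈ J},
      (M *ᵥ (J.attach.toList.map (fun j => A j.1 (σ j).1)).foldr (tubMul M) (tubOne M)) k
        = ∏ j : {x // x ∈ J}, (M *ᵥ A j.1 (σ j).1) k := by
    intro σ
    rw [foldr_hat hM]
    show ((J.attach.toList.map fun j => A j.1 (σ j).1).map fun a => (M *ᵥ a) k).prod
        = ∏ j : {x // x ∈ J}, (M *ᵥ A j.1 (σ j).1) k
    rw [List.map_map, Finset.prod_map_toList, ← Finset.univ_eq_attach]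
    exact Finset.prod_congr rfl fun j _ => rfl
  rw [Finset.sum_apply]
  have hstep : ∀ σ : Equiv.Perm {x // x ∈ J},
      ((Equiv.Perm.sign σ : ℤ) •
        (M *ᵥ (J.attach.toList.map (fun j => A j.1 (σ j).1)).foldr (tubMul M) (tubOne M))) k
      = (Equiv.Perm.sign σ : ℤ) • ∏ j : {x // x ∈ J}, (M *ᵥ A j.1 (σ j).1) k := by
    intro σ
    rw [Pi.smul_apply, hev σ]
  rw [Finset.sum_congr rfl fun σ _ => hstep σ]
  rw [pminor, ← Matrix.det_transpose, Matrix.det_apply]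
  refine Finset.sum_congr rfl fun σ _ => ?_
  simp only [Units.smul_def, Matrix.transpose_apply, Matrix.submatrix_apply, Matrix.of_apply]

end AuxTub

/-- A `⋆_M`-symmetric tensor `A` is `⋆_M`-PSD iff every `⋆_M`-principal
minor `det_M(A_{J,J})`, for nonempty `J ⊆ {1,…,n}`, is a square in `ℝ_M`. -/
theorem tenPSD_iff_principal_minors_squares (n₃ n : ℕ) (hn₃ : 1 ≤ n₃)
    (M : Matrix (Fin n₃) (Fin n₃) ℝ) (hM : Mᵀ * M = 1)
    (A : Fin n → Fin n → (Fin n₃ → ℝ)) (hA : tenTrans A = A) :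
    tenPSD M A ↔
      ∀ J : Finset (Fin n), J.Nonempty →
        ∃ x : Fin n₃ → ℝ, tubMul M x x = tenMinor M A J := by
  have hAij : ∀ p q, A q p = A p q := fun p q => congrFun (congrFun hA p) q
  set S : Fin n₃ → Matrix (Fin n) (Fin n) ℝ :=
    fun k => Matrix.of fun i j => (M *ᵥ A i j) k with hS
  have hSsymm : ∀ k i j, S k j i = S k i j := by
    intro k i j
    simp only [hS, Matrix.of_apply]
    rw [hAij i j]
  have hSherm : ∀ k, (S k).IsHermitian := by
    intro k
    show (S k)ᴴ = S k
    ext i j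
    rw [Matrix.conjTranspose_apply, star_trivial, hSsymm]
  have hquad : ∀ (k : Fin n₃) (y : Fin n → ℝ),
      y ⬝ᵥ (S k *ᵥ y) = ∑ i, ∑ ℓ, y i * (S k i ℓ * y ℓ) := by
    intro k y
    simp [dotProduct, Matrix.mulVec, Finset.mul_sum]
  have hinner : ∀ X : Fin n → Fin 1 → (Fin n₃ → ℝ),
      tenInner X (tenMul M A X)
        = ∑ k, ∑ i, ∑ ℓ, (M *ᵥ X i 0) k * (S k i ℓ * (M *ᵥ X ℓ 0) k) := by
    intro X
    have hstep : ∀ i : Fin n,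
        (∑ j : Fin 1, ∑ k, X i j k * tenMul M A X i j k)
          = ∑ k, ∑ ℓ, (M *ᵥ X i 0) k * (S k i ℓ * (M *ᵥ X ℓ 0) k) := by
      intro i
      rw [Fin.sum_univ_one]
      have h1 : ∀ k, X i 0 k * tenMul M A X i 0 k
          = ∑ ℓ, X i 0 k * (tubMul M (A i ℓ) (X ℓ 0)) k := by
        intro k
        rw [tenMul, Finset.sum_apply, Finset.mul_sum]
      rw [Finset.sum_congr rfl fun k _ => h1 k, Finset.sum_comm]
      have h2 : ∀ ℓ, ∑ k, X i 0 k * (tubMul M (A i ℓ) (X ℓ 0)) k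
          = ∑ k, (M *ᵥ X i 0) k * (S k i ℓ * (M *ᵥ X ℓ 0) k) := by
        intro ℓ
        simp only [tubMul]
        rw [dot_inv hM]
        refine Finset.sum_congr rfl fun k _ => ?_
        simp [hS]
      rw [Finset.sum_congr rfl fun ℓ _ => h2 ℓ, Finset.sum_comm]
    rw [tenInner, Finset.sum_congr rfl fun i _ => hstep i, Finset.sum_comm]
  constructor
  · rintro ⟨-, hq⟩ J hJ
    rw [square_iff hM]
    intro k
    rw [minor_hat hM A J k]
    have hpsd : (S k).PosSemidef := by
      refine posSemidef_iff_dotProduct_mulVec.mpr ⟨hSherm k, fun y => ?_⟩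
      have hy : star y = y := by funext i; simp
      rw [hy]
      set X : Fin n → Fin 1 → (Fin n₃ → ℝ) :=
        fun i _ => M⁻¹ *ᵥ (fun k' => if k' = k then y i else 0) with hX
      have hMX : ∀ i, M *ᵥ X i 0 = fun k' => if k' = k then y i else 0 :=
        fun i => mul_inv_vec hM _
      have hq' := hq X
      rw [hinner X] at hq'
      have hcol : ∑ k', ∑ i, ∑ ℓ, (M *ᵥ X i 0) k' * (S k' i ℓ * (M *ᵥ X ℓ 0) k')
          = ∑ i, ∑ ℓ, y i * (S k i ℓ * y ℓ) := by
        rw [Finset.sum_eq_single k]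
        · refine Finset.sum_congr rfl fun i _ => Finset.sum_congr rfl fun ℓ _ => ?_
          rw [hMX i, hMX ℓ]; simp
        · intro k' _ hk'
          refine Finset.sum_eq_zero fun i _ => Finset.sum_eq_zero fun ℓ _ => ?_
          rw [hMX i]; simp [hk']
        · intro h; exact absurd (Finset.mem_univ k) h
      rw [hcol] at hq'
      rw [hquad k y]
      exact hq'
    exact psd_minor_nonneg _ hpsd J
  · intro hmin
    refine ⟨hA, fun X => ?_⟩
    rw [hinner X]
    refine Finset.sum_nonneg fun k _ => ?_
    have hpsd : (S k).PosSemidef := by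
      refine psd_of_minors _ (hSherm k) fun J hJ => ?_
      have h := (square_iff hM _).mp (hmin J hJ) k
      rwa [minor_hat hM A J k] at h
    have h := (posSemidef_iff_dotProduct_mulVec.mp hpsd).2 (fun i => (M *ᵥ X i 0) k)
    have hy : star (fun i => (M *ᵥ X i 0) k) = fun i => (M *ᵥ X i 0) k := by
      funext i; simp
    rw [hy, hquad] at h
    exact h

end
end
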